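/- Let m ≥ 3, ε > 0, 0 < ρ < R, p = 2m/(m−2), and u_ε(x) = (ε/(ε²+|x|²))^{(m−2)/2} on ℝ^m. Then ∫_{B(R)\B(ρ)} |∇u_ε|² dx = m(m−2) ∫_{B(R)\B(ρ)} u_ε^p dx + (2−m) ω_{m−1} ε^{m−2} [ R^m/(ε²+R²)^{m−1} − ρ^m/(ε²+ρ²)^{m−1} ], where ω_{m−1} is the surface measure of S^{m−1}. -/

import Mathlib

open MeasureTheory

/-- The surface measure `ω_{m−1}` of the unit sphere `S^{m−1} ⊂ ℝ^m`,
expressed as `m` times the volume of the unit ball. -/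
noncomputable def sphereArea (m : ℕ) : ℝ :=
  (m : ℝ) * (volume (Metric.ball (0 : EuclideanSpace ℝ (Fin m)) 1)).toReal

open Metric Set

section Aux
variable {E : Type*} [NormedAddCommGroup E] [InnerProductSpace ℝ E]

theorem aux_deriv (k : ℕ) (ε : ℝ) (hε : 0 < ε)
    (u : E → ℝ)
    (hu : ∀ x, u x = (ε / (ε ^ 2 + ‖x‖ ^ 2)) ^ ((((k:ℝ)+3) - 2) / 2)) :
    ∀ x : E, ‖fderiv ℝ u x‖ ^ 2 =
      ((k:ℝ)+1)^2 * ε^(k+1) * ‖x‖^2 / (ε^2 + ‖x‖^2)^(k+3) := by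
  set β : ℝ := ((k:ℝ)+1)/2 with hβ
  have hβ' : (((k:ℝ)+3) - 2) / 2 = β := by rw [hβ]; ring
  have hwpos : ∀ x : E, (0:ℝ) < ε^2 + ‖x‖^2 := fun x => by positivity
  have hu2 : ∀ x : E, u x = ε^β * (ε^2 + ‖x‖^2) ^ (-β) := by
    intro x
    rw [hu x, hβ', Real.div_rpow hε.le (hwpos x).le, Real.rpow_neg (hwpos x).le,
      div_eq_mul_inv]
  have hw : ∀ x : E, HasFDerivAt (fun y : E => ε^2 + ‖y‖^2) ((2:ℝ) • (innerSL ℝ x)) x := by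
    intro x
    have h := ((hasFDerivAt_id x).norm_sq).const_add (ε^2)
    have h2 : (2:ℕ) • ((innerSL ℝ (id x)).comp (ContinuousLinearMap.id ℝ E))
        = (2:ℝ) • (innerSL ℝ x) := by
      rw [ContinuousLinearMap.comp_id, id]
      exact (two_nsmul _).trans (two_smul ℝ _).symm
    rw [h2] at h
    exact h
  have hu' : ∀ x : E, HasFDerivAt u
      ((ε^β * (-β * (ε^2 + ‖x‖^2)^(-β-1)) * 2) • innerSL ℝ x) x := by
    intro x
    have h1 := ((hw x).rpow_const (p := -β) (Or.inl (hwpos x).ne'))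
    have h2 := h1.const_mul (ε^β)
    have hfe : (fun y : E => ε^β * (ε^2 + ‖y‖^2) ^ (-β)) = u := by
      funext y; rw [hu2 y]
    rw [hfe] at h2
    convert h2 using 1
    rotate_left 2
    rw [smul_smul, smul_smul]
    all_goals rfl
  intro x
  rw [(hu' x).fderiv, norm_smul, Real.norm_eq_abs, innerSL_apply_norm, mul_pow, sq_abs]
  have e1 : (ε^β)^(2:ℕ) = ε^(k+1) := by
    rw [← Real.rpow_natCast (ε^β) 2, ← Real.rpow_mul hε.le]
    have : β * (2:ℕ) = ((k+1 : ℕ):ℝ) := by rw [hβ]; push_cast; ring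
    rw [this, Real.rpow_natCast]
  have e2 : ((ε^2 + ‖x‖^2)^(-β-1))^(2:ℕ) = ((ε^2 + ‖x‖^2)^(k+3))⁻¹ := by
    rw [← Real.rpow_natCast ((ε^2 + ‖x‖^2)^(-β-1)) 2, ← Real.rpow_mul (hwpos x).le]
    have h3 : (-β-1) * (2:ℕ) = -(((k+3:ℕ)):ℝ) := by rw [hβ]; push_cast; ring
    rw [h3, Real.rpow_neg (hwpos x).le, Real.rpow_natCast]
  rw [mul_pow, mul_pow, e1, mul_pow, e2, div_eq_mul_inv, hβ]
  ring

end Aux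

theorem aux_radial (k : ℕ) (ρ R : ℝ) (hρ : 0 < ρ) (hρR : ρ < R) (f : ℝ → ℝ) :
    ∫ x in ball (0 : EuclideanSpace ℝ (Fin (k+3))) R \ ball 0 ρ, f ‖x‖ =
      ((k:ℝ)+3) * (volume (ball (0 : EuclideanSpace ℝ (Fin (k+3))) 1)).toReal *
        ∫ r in ρ..R, r^(k+2) * f r := by
  set E := EuclideanSpace ℝ (Fin (k+3)) with hE
  rw [← integral_indicator (measurableSet_ball.diff measurableSet_ball)]
  have hset : ball (0:E) R \ ball 0 ρ = (fun x : E => ‖x‖) ⁻¹' Ico ρ R := by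
    ext x
    simp only [mem_diff, mem_ball_zero_iff, not_lt, mem_preimage, mem_Ico]
    tauto
  have h1 : ∀ x : E, (ball (0:E) R \ ball 0 ρ).indicator (fun x : E => f ‖x‖) x
      = (Ico ρ R).indicator f ‖x‖ := by
    intro x
    rw [hset]
    exact Set.indicator_comp_right _
  refine (integral_congr_ae (Filter.Eventually.of_forall h1)).trans ?_
  rw [integral_fun_norm_addHaar volume ((Ico ρ R).indicator f)]
  have hdim : Module.finrank ℝ E = k + 3 := finrank_euclideanSpace_fin
  rw [hdim]
  rw [nsmul_eq_mul, smul_eq_mul, show k+3-1 = k+2 from rfl]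
  push_cast
  rw [mul_assoc]
  congr 1
  congr 1
  have h2 : ∀ y : ℝ, y ^ (k+2) • (Ico ρ R).indicator f y
      = (Ico ρ R).indicator (fun r => r ^ (k+2) * f r) y := by
    intro y
    by_cases h : y ∈ Ico ρ R
    · rw [indicator_of_mem h, indicator_of_mem h, smul_eq_mul]
    · rw [indicator_of_notMem h, indicator_of_notMem h, smul_zero]
  simp only [h2]
  rw [integral_indicator measurableSet_Ico, Measure.restrict_restrict measurableSet_Ico]
  have h3 : Ico ρ R ∩ Ioi 0 = Ico ρ R :=
    inter_eq_left.2 (fun y hy => lt_of_lt_of_le hρ hy.1)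
  rw [h3, restrict_Ico_eq_restrict_Ioc, intervalIntegral.integral_of_le hρR.le]

theorem aux_interval (k : ℕ) (ε : ℝ) (hε : 0 < ε) (ρ R : ℝ) :
    (∫ r in ρ..R, r^(k+2) * (((k:ℝ)+1)^2 * ε^(k+1) * r^2 / (ε^2 + r^2)^(k+3))) =
      ((k:ℝ)+3) * ((k:ℝ)+1) *
        (∫ r in ρ..R, r^(k+2) * (ε^(k+3) / (ε^2 + r^2)^(k+3))) +
      (2 - (((k:ℝ))+3)) * ε^(k+1) *
        (R^(k+3) / (ε^2 + R^2)^(k+2) - ρ^(k+3) / (ε^2 + ρ^2)^(k+2)) := by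
  have hpos : ∀ r : ℝ, (0:ℝ) < ε^2 + r^2 := fun r => by positivity
  set D : ℝ → ℝ := fun r =>
    (((k:ℝ)+3) * ε^2 * r^(k+2) + (2 - ((k:ℝ)+3)) * r^(k+4)) / (ε^2 + r^2)^(k+3) with hD
  have hG : ∀ r : ℝ, HasDerivAt (fun s : ℝ => s^(k+3) / (ε^2 + s^2)^(k+2)) (D r) r := by
    intro r
    have h1 : HasDerivAt (fun s : ℝ => s^(k+3)) (((k+3:ℕ):ℝ) * r^(k+2)) r := by
      simpa using hasDerivAt_pow (k+3) r
    have hw : HasDerivAt (fun s : ℝ => ε^2 + s^2) (2*r) r := by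
      simpa using (hasDerivAt_pow 2 r).const_add (ε^2)
    have h2 := hw.pow (k+2)
    have hd := h1.div h2 (pow_ne_zero _ (hpos r).ne')
    convert hd using 1
    rotate_left 3
    rw [hD]
    simp only [show k+2-1 = k+1 from rfl, Pi.pow_apply, Nat.cast_add, Nat.cast_ofNat]
    field_simp
    ring
    all_goals rfl
  have hcD : Continuous D := by
    apply Continuous.div
    · continuity
    · continuity
    · exact fun r => pow_ne_zero _ (hpos r).ne'
  have hc2 : Continuous fun r : ℝ => r^(k+2) * (ε^(k+3) / (ε^2 + r^2)^(k+3)) := by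
    apply Continuous.mul (continuous_pow _)
    apply Continuous.div continuous_const
    · continuity
    · exact fun r => pow_ne_zero _ (hpos r).ne'
  have hkey : ∀ r : ℝ, r^(k+2) * (((k:ℝ)+1)^2 * ε^(k+1) * r^2 / (ε^2 + r^2)^(k+3)) =
      ((k:ℝ)+3) * ((k:ℝ)+1) * (r^(k+2) * (ε^(k+3) / (ε^2 + r^2)^(k+3))) +
      (2 - (((k:ℝ))+3)) * ε^(k+1) * D r := by
    intro r
    rw [hD]
    field_simp
    ring
  rw [intervalIntegral.integral_congr (g := fun r =>
      ((k:ℝ)+3) * ((k:ℝ)+1) * (r^(k+2) * (ε^(k+3) / (ε^2 + r^2)^(k+3))) +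
      (2 - (((k:ℝ))+3)) * ε^(k+1) * D r) (fun r _ => hkey r)]
  rw [intervalIntegral.integral_add
      ((hc2.const_mul _).intervalIntegrable _ _)
      ((hcD.const_mul _).intervalIntegrable _ _),
    intervalIntegral.integral_const_mul, intervalIntegral.integral_const_mul,
    intervalIntegral.integral_eq_sub_of_hasDerivAt (fun r _ => hG r)
      (hcD.intervalIntegrable _ _)]

/-- Annulus energy identity for the Aubin–Talenti bubble:
`∫_{B(R)∖B(ρ)} |∇u_ε|² = m(m−2) ∫_{B(R)∖B(ρ)} u_ε^p
  + (2−m) ω_{m−1} ε^{m−2} [R^m/(ε²+R²)^{m−1} − ρ^m/(ε²+ρ²)^{m−1}]`. -/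
theorem stmt_14 (m : ℕ) (hm : 3 ≤ m) (ε : ℝ) (hε : 0 < ε) (ρ R : ℝ)
    (hρ : 0 < ρ) (hρR : ρ < R) (p : ℝ) (hp : p = 2 * m / ((m : ℝ) - 2))
    (u : EuclideanSpace ℝ (Fin m) → ℝ)
    (hu : ∀ x, u x = (ε / (ε ^ 2 + ‖x‖ ^ 2)) ^ (((m : ℝ) - 2) / 2)) :
    (∫ x in Metric.ball (0 : EuclideanSpace ℝ (Fin m)) R \
        Metric.ball (0 : EuclideanSpace ℝ (Fin m)) ρ, ‖fderiv ℝ u x‖ ^ 2) =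
      (m : ℝ) * ((m : ℝ) - 2) *
        (∫ x in Metric.ball (0 : EuclideanSpace ℝ (Fin m)) R \
          Metric.ball (0 : EuclideanSpace ℝ (Fin m)) ρ, u x ^ p) +
      (2 - (m : ℝ)) * sphereArea m * ε ^ (m - 2) *
        (R ^ m / (ε ^ 2 + R ^ 2) ^ (m - 1) - ρ ^ m / (ε ^ 2 + ρ ^ 2) ^ (m - 1)) := by
  obtain ⟨k, rfl⟩ : ∃ k, m = k + 3 := ⟨m - 3, by omega⟩
  have hwpos : ∀ x : EuclideanSpace ℝ (Fin (k+3)), (0:ℝ) < ε^2 + ‖x‖^2 :=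
    fun x => by positivity
  have hu' : ∀ x : EuclideanSpace ℝ (Fin (k+3)),
      u x = (ε / (ε ^ 2 + ‖x‖ ^ 2)) ^ ((((k:ℝ)+3) - 2) / 2) := by
    intro x; rw [hu x]; congr 2; push_cast; ring
  have hA := aux_deriv k ε hε u hu'
  have hB : ∀ x : EuclideanSpace ℝ (Fin (k+3)),
      u x ^ p = ε^(k+3) / (ε^2 + ‖x‖^2)^(k+3) := by
    intro x
    have hb : (0:ℝ) ≤ ε / (ε^2 + ‖x‖^2) := div_nonneg hε.le (hwpos x).le
    have h3 : ((k:ℝ)+1)/2 * (2 * ((k:ℝ)+3) / ((k:ℝ)+1)) = (k:ℝ)+3 := by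
      rw [div_mul_div_comm, div_eq_iff (by positivity : (2:ℝ)*((k:ℝ)+1) ≠ 0)]
      ring
    have hq : ((((k:ℝ)+3) - 2) / 2) * p = ((k+3:ℕ):ℝ) := by
      rw [hp]
      push_cast
      rw [show ((k:ℝ)+3-2) = (k:ℝ)+1 from by ring]
      exact h3
    rw [hu' x, ← Real.rpow_mul hb, hq, Real.rpow_natCast, div_pow]
  have h₁ := aux_radial k ρ R hρ hρR
    (fun r => ((k:ℝ)+1)^2 * ε^(k+1) * r^2 / (ε^2 + r^2)^(k+3))
  have h₂ := aux_radial k ρ R hρ hρR (fun r => ε^(k+3) / (ε^2 + r^2)^(k+3))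
  have e₁ : (∫ x in ball (0 : EuclideanSpace ℝ (Fin (k+3))) R \ ball 0 ρ,
      ‖fderiv ℝ u x‖ ^ 2) =
      ((k:ℝ)+3) * (volume (ball (0 : EuclideanSpace ℝ (Fin (k+3))) 1)).toReal *
        ∫ r in ρ..R, r^(k+2) * (((k:ℝ)+1)^2 * ε^(k+1) * r^2 / (ε^2 + r^2)^(k+3)) := by
    rw [← h₁]
    exact setIntegral_congr_fun (measurableSet_ball.diff measurableSet_ball)
      (fun x _ => hA x)
  have e₂ : (∫ x in ball (0 : EuclideanSpace ℝ (Fin (k+3))) R \ ball 0 ρ, u x ^ p) =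
      ((k:ℝ)+3) * (volume (ball (0 : EuclideanSpace ℝ (Fin (k+3))) 1)).toReal *
        ∫ r in ρ..R, r^(k+2) * (ε^(k+3) / (ε^2 + r^2)^(k+3)) := by
    rw [← h₂]
    exact setIntegral_congr_fun (measurableSet_ball.diff measurableSet_ball)
      (fun x _ => hB x)
  rw [e₁, e₂, aux_interval k ε hε ρ R, sphereArea,
    show k+3-2 = k+1 from rfl, show k+3-1 = k+2 from rfl]
  push_cast
  ring
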